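/- Let P be a preference profile on a set V of agents with |V| even in which every agent has at least one acceptable agent, and let γ ∈ ℕ. Set k = γ if γ is even and k = γ − 1 otherwise, and let V* = {b ∈ V : |V_b| ≤ γ}. Let A = {a_1,…,a_k} be k new agents, and define the profile P' on V ∪ A as follows: every agent of V \ V* keeps its preference list from P; each a ∈ A has acceptable set (A \ {a}) ∪ V*, with all of its acceptable agents mutually tied; and each b ∈ V* extends its preference list from P by appending all agents of A, tied with each other and strictly below every agent of V_b. Then P admits a stable matching of egalitarian cost at most γ if and only if P' admits a perfect stable matching of egalitarian cost at most γ. -/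

import Mathlib

namespace StableRoommates

/-- A preference profile: each agent `i` has a finite set `acc i` of acceptable agents
(not containing `i` itself) and a weak order `pref i` (complete and transitive) on `acc i`;
`pref i x y` means `x ⪰_i y`. -/
structure Profile (V : Type*) [DecidableEq V] [Fintype V] where
  acc : V → Finset V
  not_self : ∀ i, i ∉ acc i
  pref : V → V → V → Prop
  pref_total : ∀ i, ∀ x ∈ acc i, ∀ y ∈ acc i, pref i x y ∨ pref i y x
  pref_trans : ∀ i x y z, pref i x y → pref i y z → pref i x z

namespace Profile

variable {V : Type*} [DecidableEq V] [Fintype V]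

/-- Strict preference `x ≻_i y`. -/
def SPref (P : Profile V) (i x y : V) : Prop := P.pref i x y ∧ ¬ P.pref i y x

/-- Tie `x ∼_i y`. -/
def Tie (P : Profile V) (i x y : V) : Prop := P.pref i x y ∧ P.pref i y x

/-- `x` and `y` are mutually acceptable. -/
def MutAcc (P : Profile V) (x y : V) : Prop := y ∈ P.acc x ∧ x ∈ P.acc y

/-- `rank_i(y) = |{z ∈ V_i : z ≻_i y}|`. -/
noncomputable def rank (P : Profile V) (i y : V) : ℕ :=
  {z : V | z ∈ P.acc i ∧ P.SPref i z y}.ncard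

/-- A matching, encoded as a symmetric partial partner function: `M x = some y`
means the pair `{x, y}` belongs to the matching, `M x = none` means `x` is unmatched. -/
structure IsMatching (P : Profile V) (M : V → Option V) : Prop where
  symm : ∀ x y, M x = some y → M y = some x
  mutacc : ∀ x y, M x = some y → P.MutAcc x y

/-- The mutually acceptable pair `{x,y} ∉ M` blocks `M`. -/
def Blocks (P : Profile V) (M : V → Option V) (x y : V) : Prop :=
  P.MutAcc x y ∧ M x ≠ some y ∧
    (∀ z, M x = some z → P.SPref x y z) ∧
    (∀ z, M y = some z → P.SPref y x z)

/-- A matching is stable if no pair blocks it. -/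
def Stable (P : Profile V) (M : V → Option V) : Prop :=
  ∀ x y, ¬ P.Blocks M x y

/-- The contribution of agent `i` to the egalitarian cost: `rank_i(M(i))`,
with `rank_i(⊥) = |V_i|`. -/
noncomputable def agentCost (P : Profile V) (M : V → Option V) (i : V) : ℕ :=
  match M i with
  | none => (P.acc i).card
  | some y => P.rank i y

/-- The egalitarian cost `γ(M) = Σ_{i ∈ V} rank_i(M(i))`. -/
noncomputable def egalCost (P : Profile V) (M : V → Option V) : ℕ :=
  ∑ i, P.agentCost M i

/-- Two disjoint mutually acceptable pairs `{u,v}` and `{u',v'}` block each other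
via `{u,u'}`. -/
def BlockVia (P : Profile V) (u v u' v' : V) : Prop :=
  P.MutAcc u v ∧ P.MutAcc u' v' ∧
    u ≠ u' ∧ u ≠ v' ∧ v ≠ u' ∧ v ≠ v' ∧
    P.MutAcc u u' ∧ P.SPref u u' v ∧ P.SPref u' u v'

/-- The pair `{u,v}` is critical for `u` (w.r.t. threshold `γ`) if
`|{x ∈ V_u \ {v} : x ⪰_u v}| > γ`. -/
def CriticalFor (P : Profile V) (γ : ℕ) (u v : V) : Prop :=
  γ < {x : V | x ∈ P.acc u ∧ x ≠ v ∧ P.pref u x v}.ncard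

/-- The pair `{u,v}` is harmless for `u` (w.r.t. threshold `γ`). -/
def HarmlessFor (P : Profile V) (γ : ℕ) (u v : V) : Prop := ¬ P.CriticalFor γ u v

/-- `u'` is a culprit of the matching `M`: some pair `{u,v} ∈ M` and some
mutually acceptable pair `{u',v'} ∉ M`, disjoint from it, block each other via `{u,u'}`. -/
def Culprit (P : Profile V) (M : V → Option V) (u' : V) : Prop :=
  ∃ u v v', M u = some v ∧ M u' ≠ some v' ∧ P.BlockVia u v u' v'

end Profile

end StableRoommates

open StableRoommates Profile


theorem even_card_aux {α : Type*} [DecidableEq α] (f : α → α) :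
    ∀ s : Finset α, (∀ x ∈ s, f x ∈ s) → (∀ x ∈ s, f (f x) = x) → (∀ x ∈ s, f x ≠ x) →
    Even s.card := by
  intro s
  induction s using Finset.strongInduction with
  | _ s ih =>
    intro hmem hinv hne
    rcases s.eq_empty_or_nonempty with rfl | ⟨a, ha⟩
    · simp
    · have hfa : f a ∈ s := hmem a ha
      have hne' : f a ≠ a := hne a ha
      have hsub : {a, f a} ⊆ s := by
        intro x hx; simp at hx; rcases hx with rfl | rfl <;> assumption
      have hss : s \ {a, f a} ⊂ s := by
        apply Finset.sdiff_ssubset hsub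
        simp
      have hmem2 : ∀ x ∈ s \ {a, f a}, f x ∈ s \ {a, f a} := by
        intro x hx
        simp only [Finset.mem_sdiff, Finset.mem_insert, Finset.mem_singleton] at hx ⊢
        obtain ⟨hxs, hx2⟩ := hx
        push_neg at hx2
        refine ⟨hmem x hxs, ?_⟩
        push_neg
        refine ⟨?_, ?_⟩
        · intro h; exact hx2.2 (by rw [← h, hinv x hxs])
        · intro h
          have : f (f x) = f (f a) := by rw [h]
          rw [hinv x hxs, hinv a ha] at this
          exact hx2.1 this
      have heq : s.card = (s \ {a, f a}).card + 2 := by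
        rw [Finset.card_sdiff_of_subset hsub]
        have h2 : ({a, f a} : Finset α).card = 2 := by
          rw [Finset.card_insert_of_notMem (by simp [Ne.symm hne']), Finset.card_singleton]
        rw [h2]
        have := Finset.card_le_card hsub
        rw [h2] at this
        omega
      rw [heq, Nat.even_add]
      simpa using ih _ hss hmem2 (fun x hx => hinv x (Finset.mem_sdiff.mp hx).1)
        (fun x hx => hne x (Finset.mem_sdiff.mp hx).1)

theorem stmt_16 {V : Type*} [DecidableEq V] [Fintype V] (P : Profile V)
    (hne : ∀ i : V, P.acc i ≠ ∅) (heven : Even (Fintype.card V))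
    (γ k : ℕ) (hk : k = if Even γ then γ else γ - 1)
    (Vstar : Finset V) (hVstar : Vstar = Finset.univ.filter (fun b : V => (P.acc b).card ≤ γ))
    (P' : Profile (V ⊕ Fin k))
    (hacc_old : ∀ v : V, v ∉ Vstar → P'.acc (Sum.inl v) = (P.acc v).image Sum.inl)
    (hpref_old : ∀ v : V, ∀ x ∈ P.acc v, ∀ y ∈ P.acc v,
      (P'.pref (Sum.inl v) (Sum.inl x) (Sum.inl y) ↔ P.pref v x y))
    (hacc_new : ∀ a : Fin k, P'.acc (Sum.inr a) =
      (Finset.univ.erase a).image Sum.inr ∪ Vstar.image Sum.inl)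
    (htie_new : ∀ a : Fin k, ∀ x ∈ P'.acc (Sum.inr a), ∀ y ∈ P'.acc (Sum.inr a),
      P'.pref (Sum.inr a) x y)
    (hacc_star : ∀ b ∈ Vstar, P'.acc (Sum.inl b) =
      (P.acc b).image Sum.inl ∪ Finset.univ.image (Sum.inr : Fin k → V ⊕ Fin k))
    (htie_star : ∀ b ∈ Vstar, ∀ a a' : Fin k,
      P'.pref (Sum.inl b) (Sum.inr a) (Sum.inr a'))
    (hstrict_star : ∀ b ∈ Vstar, ∀ x ∈ P.acc b, ∀ a : Fin k,
      P'.SPref (Sum.inl b) (Sum.inl x) (Sum.inr a)) :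
    (∃ M, P.IsMatching M ∧ P.Stable M ∧ P.egalCost M ≤ γ) ↔
    (∃ M', P'.IsMatching M' ∧ P'.Stable M' ∧ (∀ w, M' w ≠ none) ∧
      P'.egalCost M' ≤ γ) := by
  classical
  have hVs : ∀ v : V, v ∈ Vstar ↔ (P.acc v).card ≤ γ := by
    intro v; rw [hVstar]; simp
  have hacc_iff : ∀ v x : V, Sum.inl x ∈ P'.acc (Sum.inl v) ↔ x ∈ P.acc v := by
    intro v x
    by_cases hv : v ∈ Vstar
    · rw [hacc_star v hv]; simp
    · rw [hacc_old v hv]; simp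
  have hinr_mem : ∀ v ∈ Vstar, ∀ a : Fin k, Sum.inr a ∈ P'.acc (Sum.inl v) := by
    intro v hv a; rw [hacc_star v hv]; simp
  have hinr_mem' : ∀ (v : V) (a : Fin k), Sum.inr a ∈ P'.acc (Sum.inl v) → v ∈ Vstar := by
    intro v a h
    by_contra hv
    rw [hacc_old v hv] at h
    simp at h
  have hinl_mem_a : ∀ v ∈ Vstar, ∀ a : Fin k, Sum.inl v ∈ P'.acc (Sum.inr a) := by
    intro v hv a; rw [hacc_new a]
    exact Finset.mem_union_right _ (Finset.mem_image_of_mem _ hv)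
  have haccnew_inr : ∀ a b : Fin k, Sum.inr b ∈ P'.acc (Sum.inr a) ↔ b ≠ a := by
    intro a b; rw [hacc_new a]; simp
  have hSPref_iff : ∀ v x y : V, x ∈ P.acc v → y ∈ P.acc v →
      (P'.SPref (Sum.inl v) (Sum.inl x) (Sum.inl y) ↔ P.SPref v x y) := by
    intro v x y hx hy
    unfold Profile.SPref
    rw [hpref_old v x hx y hy, hpref_old v y hy x hx]
  have hrank_eq : ∀ v u : V, u ∈ P.acc v → P'.rank (Sum.inl v) (Sum.inl u) = P.rank v u := by
    intro v u hu
    have hset : {z : V ⊕ Fin k | z ∈ P'.acc (Sum.inl v) ∧ P'.SPref (Sum.inl v) z (Sum.inl u)}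
        = Sum.inl '' {z : V | z ∈ P.acc v ∧ P.SPref v z u} := by
      ext z
      cases z with
      | inl w =>
        simp only [Set.mem_image, Set.mem_setOf_eq]
        constructor
        · rintro ⟨h1, h2⟩
          exact ⟨w, ⟨(hacc_iff v w).1 h1, (hSPref_iff v w u ((hacc_iff v w).1 h1) hu).1 h2⟩, rfl⟩
        · rintro ⟨w', ⟨h1, h2⟩, hw'⟩
          obtain rfl := Sum.inl_injective hw'
          exact ⟨(hacc_iff v w').2 h1, (hSPref_iff v w' u h1 hu).2 h2⟩
      | inr a =>
        simp only [Set.mem_image, Set.mem_setOf_eq]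
        constructor
        · rintro ⟨h1, h2⟩
          exact absurd h2.1 (hstrict_star v (hinr_mem' v a h1) u hu a).2
        · rintro ⟨w', _, hw'⟩
          exact absurd hw' (by simp)
    unfold Profile.rank
    rw [hset, Set.ncard_image_of_injective _ Sum.inl_injective]
  have hrank_star : ∀ v ∈ Vstar, ∀ a : Fin k,
      P'.rank (Sum.inl v) (Sum.inr a) = (P.acc v).card := by
    intro v hv a
    have hset : {z : V ⊕ Fin k | z ∈ P'.acc (Sum.inl v) ∧ P'.SPref (Sum.inl v) z (Sum.inr a)}
        = Sum.inl '' (↑(P.acc v) : Set V) := by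
      ext z
      cases z with
      | inl w =>
        simp only [Set.mem_image, Set.mem_setOf_eq, Finset.mem_coe]
        constructor
        · rintro ⟨h1, _⟩; exact ⟨w, (hacc_iff v w).1 h1, rfl⟩
        · rintro ⟨w', h1, hw'⟩
          obtain rfl := Sum.inl_injective hw'
          exact ⟨(hacc_iff v w').2 h1, hstrict_star v hv w' h1 a⟩
      | inr b =>
        simp only [Set.mem_image, Set.mem_setOf_eq, Finset.mem_coe]
        constructor
        · rintro ⟨h1, h2⟩
          exact absurd (htie_star v hv a b) h2.2
        · rintro ⟨w', _, hw'⟩; exact absurd hw' (by simp)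
    unfold Profile.rank
    rw [hset, Set.ncard_image_of_injective _ Sum.inl_injective, Set.ncard_coe_finset]
  have hnoSPref_new : ∀ (a : Fin k) (x z : V ⊕ Fin k), x ∈ P'.acc (Sum.inr a) →
      z ∈ P'.acc (Sum.inr a) → ¬ P'.SPref (Sum.inr a) x z :=
    fun a x z hx hz hsp => hsp.2 (htie_new a z hz x hx)
  have hrank_new : ∀ (a : Fin k) (w : V ⊕ Fin k), w ∈ P'.acc (Sum.inr a) →
      P'.rank (Sum.inr a) w = 0 := by
    intro a w hw
    unfold Profile.rank
    have hempty : {z : V ⊕ Fin k | z ∈ P'.acc (Sum.inr a) ∧ P'.SPref (Sum.inr a) z w} = ∅ := by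
      ext z
      simp only [Set.mem_setOf_eq, Set.mem_empty_iff_false, iff_false, not_and]
      intro hz hsp
      exact hnoSPref_new a z w hz hw hsp
    rw [hempty, Set.ncard_empty]
  constructor
  · rintro ⟨M, hM, hst, hcost⟩
    unfold Profile.egalCost at hcost
    have hMne_self : ∀ v, M v ≠ some v := fun v h => P.not_self v ((hM.mutacc v v h).1)
    set S : Finset V := Finset.univ.filter (fun v => M v = none) with hSdef
    have hSmem : ∀ v, v ∈ S ↔ M v = none := by intro v; simp [hSdef]
    have hcard_le : ∀ v : V, P.agentCost M v ≤ γ := fun v =>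
      le_trans (Finset.single_le_sum (f := P.agentCost M) (fun i _ => Nat.zero_le _)
        (Finset.mem_univ v)) hcost
    have hstarS : ∀ v ∈ S, v ∈ Vstar := by
      intro v hv
      rw [hVs]
      have h1 := hcard_le v
      simpa [Profile.agentCost, (hSmem v).1 hv] using h1
    have hScard_le : S.card ≤ γ := by
      have h1 : ∀ v ∈ S, 1 ≤ P.agentCost M v := by
        intro v hv
        have hpos : 0 < (P.acc v).card :=
          Finset.card_pos.2 (Finset.nonempty_iff_ne_empty.2 (hne v))
        simpa [Profile.agentCost, (hSmem v).1 hv] using hpos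
      calc S.card = ∑ _v ∈ S, 1 := by simp
        _ ≤ ∑ v ∈ S, P.agentCost M v := Finset.sum_le_sum h1
        _ ≤ ∑ v : V, P.agentCost M v :=
            Finset.sum_le_sum_of_subset (Finset.subset_univ S)
        _ ≤ γ := hcost
    have hSeven : Even S.card := by
      have hcompl : Even Sᶜ.card := by
        apply even_card_aux (fun v => (M v).getD v) Sᶜ
        · intro x hx
          rw [Finset.mem_compl, hSmem] at hx
          obtain ⟨u, hu⟩ := Option.ne_none_iff_exists'.mp hx
          simp only [hu, Option.getD_some]
          rw [Finset.mem_compl, hSmem, hM.symm x u hu]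
          simp
        · intro x hx
          rw [Finset.mem_compl, hSmem] at hx
          obtain ⟨u, hu⟩ := Option.ne_none_iff_exists'.mp hx
          simp only [hu, Option.getD_some, hM.symm x u hu]
        · intro x hx
          rw [Finset.mem_compl, hSmem] at hx
          obtain ⟨u, hu⟩ := Option.ne_none_iff_exists'.mp hx
          simp only [hu, Option.getD_some]
          exact fun hxx => hMne_self x (by rw [hu, hxx])
      have h2 : S.card + Sᶜ.card = Fintype.card V := Finset.card_add_card_compl S
      rw [Nat.even_iff] at hcompl heven ⊢
      omega
    have hkeven : Even k := by
      rw [hk]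
      by_cases hγ : Even γ
      · rwa [if_pos hγ]
      · rw [if_neg hγ]
        have h2 : γ % 2 = 1 := Nat.not_even_iff.mp hγ
        rw [Nat.even_iff]; omega
    have hmk : S.card ≤ k := by
      rw [hk]
      by_cases hγ : Even γ
      · rwa [if_pos hγ]
      · rw [if_neg hγ]
        have h1 := Nat.even_iff.mp hSeven
        have h2 : γ % 2 = 1 := Nat.not_even_iff.mp hγ
        omega
    obtain ⟨n, hk2⟩ : ∃ n, k = S.card + 2 * n := by
      have h1 := Nat.even_iff.mp hSeven
      have h2 := Nat.even_iff.mp hkeven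
      exact ⟨(k - S.card) / 2, by omega⟩
    have hScard : Fintype.card {x // x ∈ S} = S.card := Fintype.card_coe S
    let E : {x // x ∈ S} ≃ Fin S.card := Fintype.equivFinOfCardEq hScard
    set M' : (V ⊕ Fin k) → Option (V ⊕ Fin k) := fun w =>
      match w with
      | Sum.inl v =>
        if h : v ∈ S then some (Sum.inr (Fin.castLE hmk (E ⟨v, h⟩)))
        else (M v).map Sum.inl
      | Sum.inr a =>
        if h : (a : ℕ) < S.card then some (Sum.inl (E.symm ⟨(a : ℕ), h⟩ : {x // x ∈ S}).1)
        else if h2 : (a : ℕ) < S.card + n then some (Sum.inr ⟨(a : ℕ) + n, by omega⟩)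
        else some (Sum.inr ⟨(a : ℕ) - n, lt_of_le_of_lt (Nat.sub_le _ _) a.isLt⟩)
      with hM'def
    have hM'l : ∀ v : V, M' (Sum.inl v) =
        if h : v ∈ S then some (Sum.inr (Fin.castLE hmk (E ⟨v, h⟩)))
        else (M v).map Sum.inl := fun v => rfl
    have hM'r : ∀ a : Fin k, M' (Sum.inr a) =
        if h : (a : ℕ) < S.card then some (Sum.inl (E.symm ⟨(a : ℕ), h⟩ : {x // x ∈ S}).1)
        else if h2 : (a : ℕ) < S.card + n then some (Sum.inr ⟨(a : ℕ) + n, by omega⟩)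
        else some (Sum.inr ⟨(a : ℕ) - n, lt_of_le_of_lt (Nat.sub_le _ _) a.isLt⟩) :=
      fun a => rfl
    have hstep : ∀ a : Fin k, ¬((a : ℕ) < S.card) →
        ∃ b : Fin k, M' (Sum.inr a) = some (Sum.inr b) ∧ ¬((b : ℕ) < S.card) ∧
          ((a : ℕ) < S.card + n → (b : ℕ) = (a : ℕ) + n) ∧
          (¬((a : ℕ) < S.card + n) → (b : ℕ) = (a : ℕ) - n) := by
      intro a h
      have hak := a.isLt
      by_cases h2 : (a : ℕ) < S.card + n
      · refine ⟨⟨(a : ℕ) + n, by omega⟩, ?_, ?_, ?_, ?_⟩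
        · rw [hM'r, dif_neg h, dif_pos h2]
        · show ¬((a : ℕ) + n < S.card); omega
        · intro _; rfl
        · intro hc; exact absurd h2 hc
      · refine ⟨⟨(a : ℕ) - n, lt_of_le_of_lt (Nat.sub_le _ _) a.isLt⟩, ?_, ?_, ?_, ?_⟩
        · rw [hM'r, dif_neg h, dif_neg h2]
        · show ¬((a : ℕ) - n < S.card); omega
        · intro hc; exact absurd hc h2
        · intro _; rfl
    have hM'symm : ∀ x y, M' x = some y → M' y = some x := by
      intro x y hxy
      cases x with
      | inl v =>
        rw [hM'l] at hxy
        by_cases hv : v ∈ S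
        · rw [dif_pos hv] at hxy
          injection hxy with hy; subst hy
          rw [hM'r]
          have hlt : ((Fin.castLE hmk (E ⟨v, hv⟩) : Fin k) : ℕ) < S.card := by
            simpa using (E ⟨v, hv⟩).isLt
          rw [dif_pos hlt]
          have hfin : (⟨((Fin.castLE hmk (E ⟨v, hv⟩) : Fin k) : ℕ), hlt⟩ : Fin S.card)
              = E ⟨v, hv⟩ := by
            apply Fin.ext; simp
          rw [hfin, Equiv.symm_apply_apply]
        · rw [dif_neg hv] at hxy
          rcases hu : M v with _ | u
          · rw [hu] at hxy; simp at hxy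
          · rw [hu] at hxy
            simp only [Option.map_some] at hxy
            injection hxy with hy; subst hy
            have huv : M u = some v := hM.symm v u hu
            have huS : u ∉ S := by rw [hSmem, huv]; simp
            rw [hM'l, dif_neg huS, huv]
            rfl
      | inr a =>
        by_cases h : (a : ℕ) < S.card
        · rw [hM'r, dif_pos h] at hxy
          injection hxy with hy; subst hy
          set w := E.symm ⟨(a : ℕ), h⟩ with hw
          rw [hM'l, dif_pos w.2]
          have hEw : E ⟨(w : V), w.2⟩ = ⟨(a : ℕ), h⟩ := by
            rw [show (⟨(w : V), w.2⟩ : {x // x ∈ S}) = w from rfl, hw, Equiv.apply_symm_apply]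
          rw [hEw]
          exact congrArg _ (congrArg _ (Fin.ext rfl))
        · obtain ⟨b, hb, hbig, hb2, hb3⟩ := hstep a h
          rw [hb] at hxy
          injection hxy with hy; subst hy
          obtain ⟨c, hc, hcbig, hc2, hc3⟩ := hstep b hbig
          rw [hc]
          congr 2
          apply Fin.ext
          have hak := a.isLt
          have hbk := b.isLt
          by_cases h2 : (a : ℕ) < S.card + n
          · have hbval := hb2 h2
            have hbn : ¬((b : ℕ) < S.card + n) := by omega
            rw [hc3 hbn]; omega
          · have hbval := hb3 h2
            have hbn : (b : ℕ) < S.card + n := by omega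
            rw [hc2 hbn]; omega
    have hM'mut : ∀ x y, M' x = some y → P'.MutAcc x y := by
      intro x y hxy
      cases x with
      | inl v =>
        by_cases hv : v ∈ S
        · rw [hM'l, dif_pos hv] at hxy
          injection hxy with hy; subst hy
          have hvs := hstarS v hv
          exact ⟨hinr_mem v hvs _, hinl_mem_a v hvs _⟩
        · rw [hM'l, dif_neg hv] at hxy
          rcases hu : M v with _ | u
          · rw [hu] at hxy; simp at hxy
          · rw [hu] at hxy; simp only [Option.map_some] at hxy
            injection hxy with hy; subst hy
            have hmu := hM.mutacc v u hu
            exact ⟨(hacc_iff v u).2 hmu.1, (hacc_iff u v).2 hmu.2⟩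
      | inr a =>
        by_cases h : (a : ℕ) < S.card
        · rw [hM'r, dif_pos h] at hxy
          injection hxy with hy; subst hy
          have hw := (E.symm ⟨(a : ℕ), h⟩).2
          have hvs := hstarS _ hw
          exact ⟨hinl_mem_a _ hvs _, hinr_mem _ hvs _⟩
        · obtain ⟨b, hb, hbig, hb2, hb3⟩ := hstep a h
          rw [hb] at hxy
          injection hxy with hy; subst hy
          have hba : b ≠ a := by
            intro hbe
            have hak := a.isLt
            by_cases h2 : (a : ℕ) < S.card + n
            · have := hb2 h2; rw [hbe] at this; omega
            · have := hb3 h2; rw [hbe] at this; omega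
          exact ⟨(haccnew_inr a b).2 hba, (haccnew_inr b a).2 (Ne.symm hba)⟩
    have hM'perf : ∀ w, M' w ≠ none := by
      intro w
      cases w with
      | inl v =>
        rw [hM'l]
        by_cases hv : v ∈ S
        · rw [dif_pos hv]; simp
        · rw [dif_neg hv]
          rcases hu : M v with _ | u
          · exact absurd ((hSmem v).2 hu) hv
          · simp
      | inr a =>
        rw [hM'r]
        by_cases h : (a : ℕ) < S.card
        · rw [dif_pos h]; simp
        · rw [dif_neg h]
          by_cases h2 : (a : ℕ) < S.card + n
          · rw [dif_pos h2]; simp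
          · rw [dif_neg h2]; simp
    have hM'st : P'.Stable M' := by
      intro x y hb
      obtain ⟨hma, hne2, hbx, hby⟩ := hb
      cases y with
      | inr a =>
        rcases hz : M' (Sum.inr a) with _ | z
        · exact hM'perf (Sum.inr a) hz
        · exact hnoSPref_new a x z hma.2 (hM'mut (Sum.inr a) z hz).1 (hby z hz)
      | inl w =>
        cases x with
        | inr a =>
          rcases hz : M' (Sum.inr a) with _ | z
          · exact hM'perf (Sum.inr a) hz
          · exact hnoSPref_new a (Sum.inl w) z hma.1 (hM'mut (Sum.inr a) z hz).1 (hbx z hz)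
        | inl u =>
          have hwu : w ∈ P.acc u := (hacc_iff u w).1 hma.1
          have huw : u ∈ P.acc w := (hacc_iff w u).1 hma.2
          apply hst u w
          refine ⟨⟨hwu, huw⟩, ?_, ?_, ?_⟩
          · intro hMuw
            apply hne2
            have huS : u ∉ S := by rw [hSmem, hMuw]; simp
            rw [hM'l, dif_neg huS, hMuw]; rfl
          · intro z hz
            have huS : u ∉ S := by rw [hSmem, hz]; simp
            have hz' : M' (Sum.inl u) = some (Sum.inl z) := by
              rw [hM'l, dif_neg huS, hz]; rfl
            exact (hSPref_iff u w z hwu (hM.mutacc u z hz).1).1 (hbx _ hz')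
          · intro z hz
            have hwS : w ∉ S := by rw [hSmem, hz]; simp
            have hz' : M' (Sum.inl w) = some (Sum.inl z) := by
              rw [hM'l, dif_neg hwS, hz]; rfl
            exact (hSPref_iff w u z huw (hM.mutacc w z hz).1).1 (hby _ hz')
    have hag_inr : ∀ a : Fin k, P'.agentCost M' (Sum.inr a) = 0 := by
      intro a
      rcases hz : M' (Sum.inr a) with _ | z
      · exact absurd hz (hM'perf (Sum.inr a))
      · simp [Profile.agentCost, hz, hrank_new a z (hM'mut (Sum.inr a) z hz).1]
    have hag_inl : ∀ v : V, P'.agentCost M' (Sum.inl v) = P.agentCost M v := by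
      intro v
      by_cases hv : v ∈ S
      · have h1 : M' (Sum.inl v) = some (Sum.inr (Fin.castLE hmk (E ⟨v, hv⟩))) := by
          rw [hM'l, dif_pos hv]
        simp [Profile.agentCost, h1, (hSmem v).1 hv, hrank_star v (hstarS v hv) _]
      · rcases hu : M v with _ | u
        · exact absurd ((hSmem v).2 hu) hv
        · have h1 : M' (Sum.inl v) = some (Sum.inl u) := by
            rw [hM'l, dif_neg hv, hu]; rfl
          simp [Profile.agentCost, h1, hu, hrank_eq v u (hM.mutacc v u hu).1]
    refine ⟨M', ⟨hM'symm, hM'mut⟩, hM'st, hM'perf, ?_⟩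
    unfold Profile.egalCost
    rw [Fintype.sum_sum_type]
    simp only [hag_inl, hag_inr, Finset.sum_const_zero, add_zero]
    exact hcost
  · rintro ⟨M', hM', hst', hperf, hcost'⟩
    unfold Profile.egalCost at hcost'
    set M : V → Option V := fun v =>
      match M' (Sum.inl v) with
      | some (Sum.inl u) => some u
      | _ => none with hMdef
    have hMsome : ∀ v u, M v = some u ↔ M' (Sum.inl v) = some (Sum.inl u) := by
      intro v u
      rcases h : M' (Sum.inl v) with _ | (w | a)
      · simp [hMdef, h]
      · simp [hMdef, h]
      · simp [hMdef, h]
    have hMm : P.IsMatching M := by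
      constructor
      · intro x y hxy
        exact (hMsome y x).2 (hM'.symm _ _ ((hMsome x y).1 hxy))
      · intro x y hxy
        have hmu := hM'.mutacc _ _ ((hMsome x y).1 hxy)
        exact ⟨(hacc_iff x y).1 hmu.1, (hacc_iff y x).1 hmu.2⟩
    have hstM : P.Stable M := by
      intro x y hb
      obtain ⟨⟨hyx, hxy⟩, hne2, hbx, hby⟩ := hb
      apply hst' (Sum.inl x) (Sum.inl y)
      refine ⟨⟨(hacc_iff x y).2 hyx, (hacc_iff y x).2 hxy⟩, ?_, ?_, ?_⟩
      · intro h; exact hne2 ((hMsome x y).2 h)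
      · intro z' hz'
        cases z' with
        | inl z =>
          have hz : M x = some z := (hMsome x z).2 hz'
          have hzacc : z ∈ P.acc x := (hMm.mutacc x z hz).1
          exact (hSPref_iff x y z hyx hzacc).2 (hbx z hz)
        | inr a =>
          exact hstrict_star x (hinr_mem' x a (hM'.mutacc _ _ hz').1) y hyx a
      · intro z' hz'
        cases z' with
        | inl z =>
          have hz : M y = some z := (hMsome y z).2 hz'
          have hzacc : z ∈ P.acc y := (hMm.mutacc y z hz).1
          exact (hSPref_iff y x z hxy hzacc).2 (hby z hz)
        | inr a =>
          exact hstrict_star y (hinr_mem' y a (hM'.mutacc _ _ hz').1) x hxy a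
    have hagent : ∀ v : V, P.agentCost M v = P'.agentCost M' (Sum.inl v) := by
      intro v
      rcases h : M' (Sum.inl v) with _ | (u | a)
      · exact absurd h (hperf _)
      · have hMv : M v = some u := (hMsome v u).2 h
        have hu : u ∈ P.acc v := (hacc_iff v u).1 (hM'.mutacc _ _ h).1
        simp only [Profile.agentCost, hMv, h]
        exact (hrank_eq v u hu).symm
      · have hMv : M v = none := by simp [hMdef, h]
        have hv : v ∈ Vstar := hinr_mem' v a (hM'.mutacc _ _ h).1
        simp only [Profile.agentCost, hMv, h]
        exact (hrank_star v hv a).symm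
    refine ⟨M, hMm, hstM, ?_⟩
    have hco : P.egalCost M = ∑ v : V, P'.agentCost M' (Sum.inl v) := by
      unfold Profile.egalCost
      exact Finset.sum_congr rfl fun v _ => hagent v
    rw [Fintype.sum_sum_type] at hcost'
    rw [hco]
    omega
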